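/- arXiv:1809.05086 — 2 statements merged into one kernel-verified Lean document; each statement's English description precedes it below -/
import Mathlib

section
/- Let κ > 0, 0 ≤ D₀ < √2, and suppose D : [0,∞) → [0,∞) satisfies D(t) ≤ y(t) where y solves y' = −κy + (κ/2)y³, y(0) = D₀. Suppose further that for some differentiable x : [0,∞) → [0,∞) with x(0) = D₀², one has x'(t) ≥ −κ(2 + D(t)²)x(t) and D(t)² ≥ x(t) for all t. Then D(t)² ≥ D₀² e^{−2κt}(1 − ½D₀²(1 − e^{−2κt})) for all t ≥ 0. -/
open Matrix

/-- lower bound for the support diameter in complete synchronization.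
If `D ≤ y` where `y` solves `y' = −κy + (κ/2)y³`, `y(0) = D₀`, and `x` satisfies
`x' ≥ −κ(2 + D²)x`, `x(0) = D₀²`, `D² ≥ x`, then
`D(t)² ≥ D₀² e^{−2κt}(1 − ½D₀²(1 − e^{−2κt}))` for all `t ≥ 0`. -/
theorem stmt13 (κ D₀ : ℝ) (hκ : 0 < κ) (hD₀ : 0 ≤ D₀) (hD₀' : D₀ < Real.sqrt 2)
    (y D x x' : ℝ → ℝ)
    (hy : ∀ t ≥ (0 : ℝ), HasDerivAt y (-κ * y t + κ / 2 * (y t)^3) t)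
    (hy0 : y 0 = D₀)
    (hDpos : ∀ t ≥ (0 : ℝ), 0 ≤ D t)
    (hDy : ∀ t ≥ (0 : ℝ), D t ≤ y t)
    (hx : ∀ t ≥ (0 : ℝ), HasDerivAt x (x' t) t)
    (hxpos : ∀ t ≥ (0 : ℝ), 0 ≤ x t)
    (hx0 : x 0 = D₀^2)
    (hx' : ∀ t ≥ (0 : ℝ), x' t ≥ -κ * (2 + (D t)^2) * x t)
    (hxD : ∀ t ≥ (0 : ℝ), (D t)^2 ≥ x t) :
    ∀ t ≥ (0 : ℝ), (D t)^2 ≥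
      D₀^2 * Real.exp (-2 * κ * t) * (1 - 1/2 * D₀^2 * (1 - Real.exp (-2 * κ * t))) := by
  have hD2 : D₀^2 < 2 := by
    nlinarith [Real.sq_sqrt (show (0:ℝ) ≤ 2 by norm_num), Real.sqrt_nonneg 2]
  set A : ℝ → ℝ := fun t => (2 - D₀^2) * Real.exp (2*κ*t) + D₀^2 with hAdef
  have hApos : ∀ t, 0 < A t := fun t => by
    have h1 := Real.exp_pos (2*κ*t)
    have h2 : 0 ≤ D₀^2 := sq_nonneg _
    simp only [hAdef]; nlinarith
  have hA' : ∀ t, HasDerivAt A ((2 - D₀^2) * (Real.exp (2*κ*t) * (2*κ))) t := fun t => by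
    have h1 : HasDerivAt (fun s : ℝ => 2*κ*s) (2*κ) t := by
      simpa using (hasDerivAt_id t).const_mul (2*κ)
    exact (h1.exp.const_mul (2 - D₀^2)).add_const _
  -- ζ : truncated y squared
  set ζ : ℝ → ℝ := fun t => (y (max t 0))^2 with hζdef
  have hζeq : ∀ t ≥ (0:ℝ), ζ t = (y t)^2 := fun t ht => by
    simp [hζdef, max_eq_left ht]
  have hζcont : Continuous ζ := by
    rw [continuous_iff_continuousAt]
    intro t
    rcases lt_trichotomy t 0 with h | h | h
    · have : ζ =ᶠ[nhds t] fun _ => (y 0)^2 := by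
        filter_upwards [Iio_mem_nhds h] with s hs
        simp [hζdef, max_eq_right (le_of_lt (Set.mem_Iio.1 hs))]
      exact ContinuousAt.congr continuousAt_const this.symm
    · subst h
      have hyc : ContinuousAt y 0 := (hy 0 le_rfl).continuousAt
      have hmax : ContinuousAt (fun s : ℝ => max s 0) 0 := by fun_prop
      have : ContinuousAt (fun s => y (max s 0)) 0 := by
        exact ContinuousAt.comp (by simpa using hyc) hmax
      exact this.pow 2
    · have hyc : ContinuousAt y t := (hy t (le_of_lt h)).continuousAt
      have : ζ =ᶠ[nhds t] fun s => (y s)^2 := by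
        filter_upwards [Ioi_mem_nhds h] with s hs
        simp [hζdef, max_eq_left (le_of_lt (Set.mem_Ioi.1 hs))]
      exact ContinuousAt.congr (hyc.pow 2) this.symm
  set Z : ℝ → ℝ := fun t => ∫ s in (0:ℝ)..t, ζ s with hZdef
  have hZ : ∀ t, HasDerivAt Z (ζ t) t := fun t =>
    (hζcont.integral_hasStrictDerivAt 0 t).hasDerivAt
  set F : ℝ → ℝ := fun t => ζ t * A t - 2*D₀^2 with hFdef
  set G : ℝ → ℝ := fun t => F t * Real.exp (-κ * Z t) with hGdef
  -- derivative of ζ within Ici 0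
  have hζd : ∀ t ≥ (0:ℝ), HasDerivWithinAt ζ (-2*κ*ζ t + κ*(ζ t)^2) (Set.Ici 0) t := by
    intro t ht
    have h1 : HasDerivAt (fun s => (y s)^2)
        (2 * y t ^ 1 * (-κ * y t + κ / 2 * (y t)^3)) t := by
      simpa using (hy t ht).fun_pow 2
    have h2 : HasDerivWithinAt ζ (2 * y t ^ 1 * (-κ * y t + κ / 2 * (y t)^3)) (Set.Ici 0) t := by
      refine (h1.hasDerivWithinAt).congr ?_ ?_
      · intro s hs; simp [hζdef, max_eq_left (Set.mem_Ici.1 hs)]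
      · simp [hζdef, max_eq_left ht]
    convert h2 using 1
    rw [hζeq t ht]; ring
  have hGd : ∀ t ≥ (0:ℝ), HasDerivWithinAt G 0 (Set.Ici 0) t := by
    intro t ht
    have hFd : HasDerivWithinAt F (κ * ζ t * F t) (Set.Ici 0) t := by
      have h1 := ((hζd t ht).fun_mul ((hA' t).hasDerivWithinAt)).sub_const (2*D₀^2)
      refine h1.congr_deriv ?_
      simp only [hFdef, hAdef]; ring
    have he : HasDerivWithinAt (fun s => Real.exp (-κ * Z s))
        (Real.exp (-κ * Z t) * (-κ * ζ t)) (Set.Ici 0) t :=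
      (((hZ t).const_mul (-κ)).exp.hasDerivWithinAt)
    have h2 := hFd.fun_mul he
    refine h2.congr_deriv ?_
    ring
  have hGcont : ContinuousOn G (Set.Ici 0) := fun t ht =>
    (hGd t ht).continuousWithinAt
  have hFzero : ∀ t ≥ (0:ℝ), F t = 0 := by
    intro t ht
    have := constant_of_has_deriv_right_zero
      (f := G) (a := 0) (b := t) (hGcont.mono Set.Icc_subset_Ici_self)
      (fun s hs => (hGd s hs.1).mono (Set.Ici_subset_Ici.2 hs.1))
      t (Set.mem_Icc.2 ⟨ht, le_rfl⟩)
    have hG0 : G 0 = 0 := by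
      have hζ0 : ζ 0 = D₀^2 := by simp [hζdef, hy0]
      have hZ0 : Z 0 = 0 := by simp [hZdef]
      simp [hGdef, hFdef, hζ0, hZ0, hAdef]
      ring
    rw [hG0] at this
    have := mul_eq_zero.1 this
    rcases this with h | h
    · exact h
    · exact absurd h (Real.exp_ne_zero _)
  have hyA : ∀ t ≥ (0:ℝ), (y t)^2 * A t = 2*D₀^2 := by
    intro t ht
    have := hFzero t ht
    rw [hFdef] at this
    simp only at this
    rw [hζeq t ht] at this
    linarith
  -- Step 2: monotone quantity ψ = x * exp(4κt) / A
  set E : ℝ → ℝ := fun t => Real.exp (4*κ*t) / A t with hEdef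
  have hEpos : ∀ t, 0 < E t := fun t => div_pos (Real.exp_pos _) (hApos t)
  have hE' : ∀ t, HasDerivAt E
      ((Real.exp (4*κ*t) * (4*κ) * A t -
        Real.exp (4*κ*t) * ((2 - D₀^2) * (Real.exp (2*κ*t) * (2*κ)))) / (A t)^2) t := by
    intro t
    have h1 : HasDerivAt (fun s : ℝ => Real.exp (4*κ*s)) (Real.exp (4*κ*t) * (4*κ)) t := by
      have : HasDerivAt (fun s : ℝ => 4*κ*s) (4*κ) t := by
        simpa using (hasDerivAt_id t).const_mul (4*κ)
      exact this.exp
    exact h1.div (hA' t) (hApos t).ne'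
  have hψd : ∀ t ≥ (0:ℝ), HasDerivAt (fun s => x s * E s) (x' t * E t + x t *
      ((Real.exp (4*κ*t) * (4*κ) * A t -
        Real.exp (4*κ*t) * ((2 - D₀^2) * (Real.exp (2*κ*t) * (2*κ)))) / (A t)^2)) t :=
    fun t ht => (hx t ht).mul (hE' t)
  have hψnn : ∀ t > (0:ℝ), 0 ≤ x' t * E t + x t *
      ((Real.exp (4*κ*t) * (4*κ) * A t -
        Real.exp (4*κ*t) * ((2 - D₀^2) * (Real.exp (2*κ*t) * (2*κ)))) / (A t)^2) := by
    intro t ht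
    have ht' : (0:ℝ) ≤ t := le_of_lt ht
    have hEkey : (Real.exp (4*κ*t) * (4*κ) * A t -
        Real.exp (4*κ*t) * ((2 - D₀^2) * (Real.exp (2*κ*t) * (2*κ)))) / (A t)^2
        = E t * (2*κ + κ * (y t)^2) := by
      have hyAt := hyA t ht'
      have hAne : A t ≠ 0 := (hApos t).ne'
      have hA2 : (2 - D₀^2) * Real.exp (2*κ*t) = A t - D₀^2 := by
        simp only [hAdef]; ring
      have key2 : Real.exp (4*κ*t) * (4*κ) * A t -
          Real.exp (4*κ*t) * ((2 - D₀^2) * (Real.exp (2*κ*t) * (2*κ)))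
          = Real.exp (4*κ*t) * (2*κ + κ*(y t)^2) * A t := by
        linear_combination (-2*κ*Real.exp (4*κ*t)) * hA2 + (-κ*Real.exp (4*κ*t)) * hyAt
      rw [key2, hEdef]
      simp only
      field_simp
    rw [hEkey]
    have h1 := hx' t ht'
    have hEp := hEpos t
    have hD2y : (D t)^2 ≤ (y t)^2 := by
      have := hDpos t ht'
      have := hDy t ht'
      nlinarith
    have hxp := hxpos t ht'
    nlinarith [mul_le_mul_of_nonneg_right h1 hEp.le,
      mul_nonneg (mul_nonneg hxp hEp.le) (sub_nonneg.2 hD2y), hκ.le]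
  -- monotonicity
  have hmono : MonotoneOn (fun s => x s * E s) (Set.Ici 0) := by
    apply monotoneOn_of_hasDerivWithinAt_nonneg (convex_Ici 0)
      (f' := fun t => x' t * E t + x t *
        ((Real.exp (4*κ*t) * (4*κ) * A t -
          Real.exp (4*κ*t) * ((2 - D₀^2) * (Real.exp (2*κ*t) * (2*κ)))) / (A t)^2))
    · exact fun t ht => ((hx t ht).continuousAt.mul (hE' t).continuousAt).continuousWithinAt
    · intro t ht
      rw [interior_Ici] at ht
      exact (hψd t (le_of_lt ht)).hasDerivWithinAt
    · intro t ht
      rw [interior_Ici] at ht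
      exact hψnn t ht
  intro t ht
  have hψ0 : x 0 * E 0 = D₀^2 / 2 := by
    rw [hx0, hEdef]
    simp [hAdef]
    ring
  have hmt := hmono (Set.self_mem_Ici) (Set.mem_Ici.2 ht) ht
  simp only at hmt
  rw [hψ0] at hmt
  have hEp := hEpos t
  have hxt : x t ≥ (D₀^2/2) / E t := by
    rw [ge_iff_le, div_le_iff₀ hEp]
    exact hmt
  have hrhs : (D₀^2/2) / E t =
      D₀^2 * Real.exp (-2*κ*t) * (1 - 1/2 * D₀^2 * (1 - Real.exp (-2*κ*t))) := by
    have hu : Real.exp (-2*κ*t) = (Real.exp (2*κ*t))⁻¹ := by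
      rw [← Real.exp_neg]; ring_nf
    have h4 : Real.exp (4*κ*t) = Real.exp (2*κ*t) * Real.exp (2*κ*t) := by
      rw [← Real.exp_add]; ring_nf
    rw [hEdef]
    simp only [hAdef]
    rw [hu, h4]
    have := (Real.exp_pos (2*κ*t)).ne'
    field_simp
    ring
  calc (D t)^2 ≥ x t := hxD t ht
    _ ≥ (D₀^2/2) / E t := hxt
    _ = _ := hrhs
end

section
/- Let α ≥ 0, κ > 0 with κ > (3/2)^{3/2}α, and let y solve y' = α − κy + (κ/2)y³ with y(0) = y₀ ∈ [0, ζ₂(α/κ)). Then y(t) < ζ₂(α/κ) for all t ≥ 0 and y(t) → ζ₁(α/κ) as t → +∞, where ζ₁(η) < ζ₂(η) are the two nonnegative roots of ½z³ − z + η. If y₀ > ζ₁(α/κ) then y is decreasing; if y₀ < ζ₁(α/κ) then y is nondecreasing. -/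
open Matrix Real Filter

lemma linODE_formula (u g : ℝ → ℝ) (hg : Continuous g)
    (hu : ∀ t ≥ (0:ℝ), HasDerivAt u (g t * u t) t) (t : ℝ) (ht : 0 ≤ t) :
    u t = u 0 * Real.exp (∫ s in (0:ℝ)..t, g s) := by
  set G : ℝ → ℝ := fun r => ∫ s in (0:ℝ)..r, g s with hGdef
  have hG : ∀ r : ℝ, HasDerivAt G (g r) r := fun r =>
    intervalIntegral.integral_hasDerivAt_right (hg.intervalIntegrable _ _)
      (hg.stronglyMeasurableAtFilter _ _) hg.continuousAt
  set h : ℝ → ℝ := fun r => u r * Real.exp (-(G r)) with hhdef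
  have hh : ∀ r ≥ (0:ℝ), HasDerivAt h 0 r := by
    intro r hr
    have h1 : HasDerivAt (fun r => u r * Real.exp (-(G r)))
        (g r * u r * Real.exp (-(G r)) + u r * (Real.exp (-(G r)) * -g r)) r :=
      (hu r hr).mul (((hG r).neg).exp)
    convert h1 using 1
    ring
  have hconst : h t = h 0 := by
    have hcont : ContinuousOn h (Set.Icc 0 t) := fun s hs =>
      ((hh s hs.1).continuousAt).continuousWithinAt
    exact constant_of_has_deriv_right_zero hcont
      (fun s hs => (hh s hs.1).hasDerivWithinAt) t ⟨ht, le_rfl⟩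
  have hG0 : G 0 = 0 := intervalIntegral.integral_same
  have : u t * Real.exp (-(G t)) = u 0 := by
    simpa [hhdef, hG0] using hconst
  have h3 := congrArg (fun x => x * Real.exp (G t)) this
  simpa [mul_assoc, ← Real.exp_add] using h3


set_option maxHeartbeats 1000000 in
/-- dynamics of the barrier ODE `y' = α − κy + (κ/2)y³` with
`κ > (3/2)^{3/2} α ≥ 0` and `y(0) = y₀ ∈ [0, ζ₂)`: the solution stays below `ζ₂`,
converges to `ζ₁`, is strictly decreasing if `y₀ > ζ₁` and nondecreasing if `y₀ < ζ₁`,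
where `ζ₁ < ζ₂` are the two nonnegative roots of `½z³ − z + α/κ`. -/
theorem stmt15 (α κ : ℝ) (hα : 0 ≤ α) (hκ : 0 < κ)
    (hακ : ((3 : ℝ)/2) ^ ((3 : ℝ)/2) * α < κ)
    (ζ₁ ζ₂ : ℝ) (hζ₁ : 0 ≤ ζ₁) (hζlt : ζ₁ < ζ₂)
    (hroot₁ : 1/2 * ζ₁^3 - ζ₁ + α/κ = 0)
    (hroot₂ : 1/2 * ζ₂^3 - ζ₂ + α/κ = 0)
    (y : ℝ → ℝ) (y₀ : ℝ)
    (hy : ∀ t ≥ (0 : ℝ), HasDerivAt y (α - κ * y t + κ / 2 * (y t)^3) t)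
    (hy0 : y 0 = y₀) (hy₀0 : 0 ≤ y₀) (hy₀2 : y₀ < ζ₂) :
    (∀ t ≥ (0 : ℝ), y t < ζ₂) ∧
    Filter.Tendsto y Filter.atTop (nhds ζ₁) ∧
    (ζ₁ < y₀ → StrictAntiOn y (Set.Ici (0 : ℝ))) ∧
    (y₀ < ζ₁ → MonotoneOn y (Set.Ici (0 : ℝ))) := by
  have hκ0 : κ ≠ 0 := ne_of_gt hκ
  have hζ₂pos : 0 < ζ₂ := lt_of_le_of_lt hζ₁ hζlt
  have hhalf : (0:ℝ) < κ/2 := by linarith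
  -- algebraic identity : sum of squares is 2
  have hA : ζ₁^2 + ζ₁*ζ₂ + ζ₂^2 = 2 := by
    have h0 : (ζ₁ - ζ₂) * (1/2*(ζ₁^2 + ζ₁*ζ₂ + ζ₂^2) - 1) = 0 := by
      linear_combination hroot₁ - hroot₂
    rcases mul_eq_zero.mp h0 with h | h
    · exact absurd (sub_eq_zero.mp h) (ne_of_lt hζlt)
    · linarith
  have hα' : α = κ * (ζ₁ - 1/2*ζ₁^3) := by
    have h1 : α/κ = ζ₁ - 1/2*ζ₁^3 := by linarith
    rw [div_eq_iff hκ0] at h1; linarith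
  have hfact : ∀ z : ℝ, α - κ*z + κ/2*z^3 = κ/2*(z-ζ₁)*(z-ζ₂)*(z+ζ₁+ζ₂) := by
    intro z
    linear_combination hα' + (κ/2)*(z - ζ₁)*hA
  -- continuity
  have hcy : ∀ t ≥ (0:ℝ), ContinuousAt y t := fun t ht => (hy t ht).continuousAt
  have hyc : ContinuousOn y (Set.Ici (0:ℝ)) := fun t ht => (hcy t ht).continuousWithinAt
  set Y : ℝ → ℝ := fun t => y (max t 0) with hYdef
  have hYc : Continuous Y := by
    have hm : Continuous (fun s : ℝ => max s 0) := continuous_id.max continuous_const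
    have h2 : ContinuousOn Y Set.univ :=
      hyc.comp hm.continuousOn (fun x _ => le_max_right x 0)
    rw [← continuousOn_univ]
    exact h2
  have hYeq : ∀ t ≥ (0:ℝ), Y t = y t := fun t ht => by
    simp only [hYdef, max_eq_left ht]
  -- key solution formula for each root
  have key : ∀ a b r : ℝ,
      (∀ z : ℝ, α - κ*z + κ/2*z^3 = (κ/2*(z-a)*(z-b))*(z-r)) →
      ∀ t ≥ (0:ℝ), y t - r
        = (y₀ - r) * Real.exp (∫ s in (0:ℝ)..t, κ/2*(Y s - a)*(Y s - b)) := by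
    intro a b r hf t ht
    have hgc : Continuous (fun s => κ/2*(Y s - a)*(Y s - b)) :=
      (continuous_const.mul (hYc.sub continuous_const)).mul (hYc.sub continuous_const)
    have hu : ∀ s ≥ (0:ℝ), HasDerivAt (fun τ => y τ - r)
        ((κ/2*(Y s - a)*(Y s - b)) * (y s - r)) s := by
      intro s hs
      have h1 := (hy s hs).sub_const r
      have h2 : α - κ * y s + κ/2 * (y s)^3
          = (κ/2*(Y s - a)*(Y s - b)) * (y s - r) := by
        rw [hYeq s hs]; exact hf (y s)
      rwa [h2] at h1
    have h3 := linODE_formula (fun τ => y τ - r) _ hgc hu t ht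
    simpa [hy0] using h3
  have eq₂ := key ζ₁ (-(ζ₁+ζ₂)) ζ₂ (fun z => by rw [hfact z]; ring)
  have eq₁ := key ζ₂ (-(ζ₁+ζ₂)) ζ₁ (fun z => by rw [hfact z]; ring)
  have eq₀ := key ζ₁ ζ₂ (-(ζ₁+ζ₂)) (fun z => by rw [hfact z]; ring)
  -- part 1 : stays below ζ₂
  have part1 : ∀ t ≥ (0:ℝ), y t < ζ₂ := by
    intro t ht
    have h := eq₂ t ht
    have hp : (y₀ - ζ₂) * Real.exp (∫ s in (0:ℝ)..t,
        κ/2*(Y s - ζ₁)*(Y s - -(ζ₁+ζ₂))) < 0 :=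
      mul_neg_of_neg_of_pos (by linarith) (Real.exp_pos _)
    linarith
  -- lower barrier : stays above the negative root
  have low : ∀ t ≥ (0:ℝ), -(ζ₁+ζ₂) < y t := by
    intro t ht
    have h := eq₀ t ht
    have hp : (0:ℝ) < (y₀ - -(ζ₁+ζ₂)) * Real.exp (∫ s in (0:ℝ)..t,
        κ/2*(Y s - ζ₁)*(Y s - ζ₂)) :=
      mul_pos (by linarith) (Real.exp_pos _)
    linarith
  -- tendsto of exponentials
  have hexp0 : ∀ c : ℝ, 0 < c →
      Tendsto (fun t : ℝ => Real.exp (-(c*t))) atTop (nhds 0) := by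
    intro c hc
    exact Real.tendsto_exp_neg_atTop_nhds_zero.comp
      (Filter.Tendsto.const_mul_atTop hc tendsto_id)
  rcases lt_trichotomy ζ₁ y₀ with hlt | heq | hgt
  · -- y₀ > ζ₁ : strictly decreasing to ζ₁
    have sign : ∀ t ≥ (0:ℝ), ζ₁ < y t := by
      intro t ht
      have h := eq₁ t ht
      have hp : (0:ℝ) < (y₀ - ζ₁) * Real.exp (∫ s in (0:ℝ)..t,
          κ/2*(Y s - ζ₂)*(Y s - -(ζ₁+ζ₂))) :=
        mul_pos (by linarith) (Real.exp_pos _)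
      linarith
    have hanti : StrictAntiOn y (Set.Ici (0:ℝ)) := by
      apply strictAntiOn_of_deriv_neg (convex_Ici 0) hyc
      intro x hx
      rw [interior_Ici] at hx
      have hx0 : (0:ℝ) ≤ x := le_of_lt hx
      rw [(hy x hx0).deriv, hfact (y x)]
      have h1 : ζ₁ < y x := sign x hx0
      have h2 : y x < ζ₂ := part1 x hx0
      have p3 : 0 < y x + ζ₁ + ζ₂ := by linarith
      have hp : 0 < κ/2*(y x - ζ₁)*(y x + ζ₁ + ζ₂) :=
        mul_pos (mul_pos hhalf (by linarith)) p3
      have hq := mul_pos hp (show (0:ℝ) < ζ₂ - y x by linarith)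
      linarith [hq]
    have ybound : ∀ t ≥ (0:ℝ), y t ≤ y₀ := by
      intro t ht
      have := hanti.antitoneOn Set.self_mem_Ici ht ht
      rwa [hy0] at this
    set c : ℝ := κ/2*(ζ₂ - y₀)*(2*ζ₁+ζ₂) with hcdef
    have hc : 0 < c := mul_pos (mul_pos hhalf (by linarith)) (by linarith)
    have gbound : ∀ t ≥ (0:ℝ),
        (∫ s in (0:ℝ)..t, κ/2*(Y s - ζ₂)*(Y s - -(ζ₁+ζ₂))) ≤ -(c*t) := by
      intro t ht
      have hgc : Continuous (fun s => κ/2*(Y s - ζ₂)*(Y s - -(ζ₁+ζ₂))) :=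
        (continuous_const.mul (hYc.sub continuous_const)).mul (hYc.sub continuous_const)
      have hle : ∀ s ∈ Set.Icc (0:ℝ) t,
          κ/2*(Y s - ζ₂)*(Y s - -(ζ₁+ζ₂)) ≤ -c := by
        intro s hs
        rw [hYeq s hs.1]
        have h1 : y s ≤ y₀ := ybound s hs.1
        have h2 : ζ₁ < y s := sign s hs.1
        have e1 : (y s - ζ₂) * ((y s + ζ₁ + ζ₂) - (2*ζ₁+ζ₂)) ≤ 0 :=
          mul_nonpos_of_nonpos_of_nonneg (by linarith [part1 s hs.1]) (by linarith)
        have e2 : ((y s - ζ₂) - (y₀ - ζ₂)) * (2*ζ₁+ζ₂) ≤ 0 :=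
          mul_nonpos_of_nonpos_of_nonneg (by linarith) (by linarith)
        have e3 : (y s - ζ₂)*(y s + ζ₁ + ζ₂) ≤ (y₀ - ζ₂)*(2*ζ₁+ζ₂) := by linarith [e1, e2]
        have e4 := mul_le_mul_of_nonneg_left e3 (le_of_lt hhalf)
        rw [hcdef]
        linarith [e4]
      have h1 := intervalIntegral.integral_mono_on ht
        (hgc.intervalIntegrable _ _) (intervalIntegrable_const (c := -c) (μ := MeasureTheory.volume)) hle
      rw [intervalIntegral.integral_const, smul_eq_mul] at h1
      linarith
    have htends : Tendsto y atTop (nhds ζ₁) := by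
      have hup : ∀ t ≥ (0:ℝ), y t ≤ ζ₁ + (y₀ - ζ₁) * Real.exp (-(c*t)) := by
        intro t ht
        have h := eq₁ t ht
        have h2 : Real.exp (∫ s in (0:ℝ)..t, κ/2*(Y s - ζ₂)*(Y s - -(ζ₁+ζ₂)))
            ≤ Real.exp (-(c*t)) := Real.exp_le_exp.mpr (gbound t ht)
        linarith [mul_le_mul_of_nonneg_left h2 (by linarith : (0:ℝ) ≤ y₀ - ζ₁)]
      have hlim : Tendsto (fun t => ζ₁ + (y₀ - ζ₁) * Real.exp (-(c*t))) atTop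
          (nhds (ζ₁ + (y₀ - ζ₁) * 0)) :=
        Filter.Tendsto.const_add _ (Filter.Tendsto.const_mul _ (hexp0 c hc))
      rw [mul_zero, add_zero] at hlim
      apply tendsto_of_tendsto_of_tendsto_of_le_of_le' tendsto_const_nhds hlim
      · filter_upwards [eventually_ge_atTop (0:ℝ)] with t ht using le_of_lt (sign t ht)
      · filter_upwards [eventually_ge_atTop (0:ℝ)] with t ht using hup t ht
    exact ⟨part1, htends, fun _ => hanti, fun h => absurd h (by linarith)⟩
  · -- y₀ = ζ₁ : constant solution
    have sign : ∀ t ≥ (0:ℝ), y t = ζ₁ := by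
      intro t ht
      have h := eq₁ t ht
      rw [← heq] at h
      have h2 : y t - ζ₁ = 0 := by simpa using h
      linarith
    have htends : Tendsto y atTop (nhds ζ₁) := by
      apply Tendsto.congr' _ (tendsto_const_nhds (α := ℝ) (x := ζ₁))
      filter_upwards [eventually_ge_atTop (0:ℝ)] with t ht using (sign t ht).symm
    exact ⟨part1, htends, fun h => absurd h (by linarith),
      fun h => absurd h (by linarith)⟩
  · -- y₀ < ζ₁ : nondecreasing to ζ₁
    have sign : ∀ t ≥ (0:ℝ), y t < ζ₁ := by
      intro t ht
      have h := eq₁ t ht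
      have hp : (y₀ - ζ₁) * Real.exp (∫ s in (0:ℝ)..t,
          κ/2*(Y s - ζ₂)*(Y s - -(ζ₁+ζ₂))) < 0 :=
        mul_neg_of_neg_of_pos (by linarith) (Real.exp_pos _)
      linarith
    have hmonos : StrictMonoOn y (Set.Ici (0:ℝ)) := by
      apply strictMonoOn_of_deriv_pos (convex_Ici 0) hyc
      intro x hx
      rw [interior_Ici] at hx
      have hx0 : (0:ℝ) ≤ x := le_of_lt hx
      rw [(hy x hx0).deriv, hfact (y x)]
      have h1 : y x < ζ₁ := sign x hx0
      have h2 : -(ζ₁+ζ₂) < y x := low x hx0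
      have hp : 0 < κ/2*(ζ₁ - y x)*(ζ₂ - y x) :=
        mul_pos (mul_pos hhalf (by linarith)) (by linarith [part1 x hx0])
      have hq := mul_pos hp (show (0:ℝ) < y x + ζ₁ + ζ₂ by linarith)
      linarith [hq]
    have ybound : ∀ t ≥ (0:ℝ), y₀ ≤ y t := by
      intro t ht
      have := hmonos.monotoneOn Set.self_mem_Ici ht ht
      rwa [hy0] at this
    set c : ℝ := κ/2*(ζ₂ - ζ₁)*(y₀+ζ₁+ζ₂) with hcdef
    have hc : 0 < c := mul_pos (mul_pos hhalf (by linarith)) (by linarith)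
    have gbound : ∀ t ≥ (0:ℝ),
        (∫ s in (0:ℝ)..t, κ/2*(Y s - ζ₂)*(Y s - -(ζ₁+ζ₂))) ≤ -(c*t) := by
      intro t ht
      have hgc : Continuous (fun s => κ/2*(Y s - ζ₂)*(Y s - -(ζ₁+ζ₂))) :=
        (continuous_const.mul (hYc.sub continuous_const)).mul (hYc.sub continuous_const)
      have hle : ∀ s ∈ Set.Icc (0:ℝ) t,
          κ/2*(Y s - ζ₂)*(Y s - -(ζ₁+ζ₂)) ≤ -c := by
        intro s hs
        rw [hYeq s hs.1]
        have h1 : y₀ ≤ y s := ybound s hs.1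
        have h2 : y s < ζ₁ := sign s hs.1
        have e1 : (y s - ζ₂) * ((y s + ζ₁ + ζ₂) - (y₀+ζ₁+ζ₂)) ≤ 0 :=
          mul_nonpos_of_nonpos_of_nonneg (by linarith) (by linarith)
        have e2 : ((y s - ζ₂) - (ζ₁ - ζ₂)) * (y₀+ζ₁+ζ₂) ≤ 0 :=
          mul_nonpos_of_nonpos_of_nonneg (by linarith) (by linarith)
        have e3 : (y s - ζ₂)*(y s + ζ₁ + ζ₂) ≤ (ζ₁ - ζ₂)*(y₀+ζ₁+ζ₂) := by linarith [e1, e2]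
        have e4 := mul_le_mul_of_nonneg_left e3 (le_of_lt hhalf)
        rw [hcdef]
        linarith [e4]
      have h1 := intervalIntegral.integral_mono_on ht
        (hgc.intervalIntegrable _ _) (intervalIntegrable_const (c := -c) (μ := MeasureTheory.volume)) hle
      rw [intervalIntegral.integral_const, smul_eq_mul] at h1
      linarith
    have htends : Tendsto y atTop (nhds ζ₁) := by
      have hlo : ∀ t ≥ (0:ℝ), ζ₁ - (ζ₁ - y₀) * Real.exp (-(c*t)) ≤ y t := by
        intro t ht
        have h := eq₁ t ht
        have h2 : Real.exp (∫ s in (0:ℝ)..t, κ/2*(Y s - ζ₂)*(Y s - -(ζ₁+ζ₂)))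
            ≤ Real.exp (-(c*t)) := Real.exp_le_exp.mpr (gbound t ht)
        linarith [mul_le_mul_of_nonneg_left h2 (by linarith : (0:ℝ) ≤ ζ₁ - y₀)]
      have hlim : Tendsto (fun t => ζ₁ - (ζ₁ - y₀) * Real.exp (-(c*t))) atTop
          (nhds (ζ₁ - (ζ₁ - y₀) * 0)) :=
        Filter.Tendsto.const_sub _ (Filter.Tendsto.const_mul _ (hexp0 c hc))
      rw [mul_zero, sub_zero] at hlim
      apply tendsto_of_tendsto_of_tendsto_of_le_of_le' hlim tendsto_const_nhds
      · filter_upwards [eventually_ge_atTop (0:ℝ)] with t ht using hlo t ht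
      · filter_upwards [eventually_ge_atTop (0:ℝ)] with t ht using le_of_lt (sign t ht)
    exact ⟨part1, htends, fun h => absurd h (by linarith),
      fun _ => hmonos.monotoneOn⟩
end
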